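/- Let S ⊆ C^{d1} ⊗ C^{d2} be a subspace such that every density operator supported on S has non-positive partial transpose (NPT) across the cut 1|2. Let H be any finite-dimensional Hilbert space. Then for every density operator ρ supported on S ⊗ H (viewed in C^{d1} ⊗ (C^{d2} ⊗ H)), the partial transpose of ρ on the first factor has a negative eigenvalue. -/

import Mathlib

/-- Partial transpose on the first tensor factor. -/
def pt1 {a b : Type*} (ρ : Matrix (a × b) (a × b) ℂ) : Matrix (a × b) (a × b) ℂ :=
  Matrix.of fun p q => ρ (q.1, p.2) (p.1, q.2)

open scoped ComplexOrder

open Classical in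
/-- Embedding `w ⊗ e_k`. -/
noncomputable def embed {a b h : Type*} (k : h) (w : a × b → ℂ) : a × (b × h) → ℂ :=
  fun p => if p.2.2 = k then w (p.1, p.2.1) else 0

open Classical in
lemma star_embed {a b h : Type*} (k : h) (w : a × b → ℂ) :
    star (embed k w) = embed k (star w) := by
  funext p
  simp [embed, apply_ite (star : ℂ → ℂ)]

open Classical in
lemma sum_embed {a b h : Type*} [Fintype a] [Fintype b] [Fintype h]
    (k : h) (f : a × (b × h) → ℂ) (v : a × b → ℂ) :
    ∑ q : a × (b × h), f q * embed k v q = ∑ q : a × b, f (q.1, (q.2, k)) * v q := by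
  simp only [embed, mul_ite, mul_zero, Fintype.sum_prod_type, Finset.sum_ite_eq',
    Finset.mem_univ, if_true]

open Classical in
lemma dot_embed {a b h : Type*} [Fintype a] [Fintype b] [Fintype h]
    (k : h) (f : a × (b × h) → ℂ) (v : a × b → ℂ) :
    ∑ q : a × (b × h), embed k v q * f q = ∑ q : a × b, v q * f (q.1, (q.2, k)) := by
  simp only [embed, ite_mul, zero_mul, Fintype.sum_prod_type, Finset.sum_ite_eq',
    Finset.mem_univ, if_true]

lemma quad_sum {a b h : Type*} [Fintype a] [Fintype b] [Fintype h]
    (A : Matrix (a × b) (a × b) ℂ) (B : Matrix (a × (b × h)) (a × (b × h)) ℂ)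
    (hAB : ∀ x y : a × b, A x y = ∑ k : h, B (x.1, (x.2, k)) (y.1, (y.2, k)))
    (w : a × b → ℂ) :
    dotProduct (star w) (A.mulVec w)
      = ∑ k : h, dotProduct (star (embed k w)) (B.mulVec (embed k w)) := by
  have e1 : ∀ k : h, dotProduct (star (embed k w)) (B.mulVec (embed k w))
      = ∑ p : a × b, ∑ q : a × b, star (w p) * (B (p.1, (p.2, k)) (q.1, (q.2, k)) * w q) := by
    intro k
    rw [dotProduct, star_embed, dot_embed]
    refine Finset.sum_congr rfl fun p _ => ?_
    rw [Matrix.mulVec, dotProduct, sum_embed, Finset.mul_sum, Pi.star_apply]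
  have e2 : dotProduct (star w) (A.mulVec w)
      = ∑ p : a × b, ∑ q : a × b, ∑ k : h, star (w p) * (B (p.1, (p.2, k)) (q.1, (q.2, k)) * w q) := by
    rw [dotProduct]
    refine Finset.sum_congr rfl fun p _ => ?_
    rw [Matrix.mulVec, dotProduct, Finset.mul_sum, Pi.star_apply]
    refine Finset.sum_congr rfl fun q _ => ?_
    rw [hAB, Finset.sum_mul, Finset.mul_sum]
  rw [e2]
  rw [show (∑ p : a × b, ∑ q : a × b, ∑ k : h,
      star (w p) * (B (p.1, (p.2, k)) (q.1, (q.2, k)) * w q))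
    = ∑ p : a × b, ∑ k : h, ∑ q : a × b,
      star (w p) * (B (p.1, (p.2, k)) (q.1, (q.2, k)) * w q) from
    Finset.sum_congr rfl fun p _ => Finset.sum_comm]
  rw [Finset.sum_comm]
  exact Finset.sum_congr rfl fun k _ => (e1 k).symm

theorem stmt17 (d1 d2 : ℕ) {h : Type*} [Fintype h]
    (S : Submodule ℂ (Fin d1 × Fin d2 → ℂ))
    (hS : ∀ σ : Matrix (Fin d1 × Fin d2) (Fin d1 × Fin d2) ℂ,
      σ.PosSemidef → σ.trace = 1 → (∀ v, σ.mulVec v ∈ S) →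
      ∃ Γ : Fin d1 × Fin d2 → ℂ,
        (dotProduct (star Γ) ((pt1 σ).mulVec Γ)).re < 0) :
    ∀ ρ : Matrix (Fin d1 × (Fin d2 × h)) (Fin d1 × (Fin d2 × h)) ℂ,
      ρ.PosSemidef → ρ.trace = 1 →
      (∀ v, ρ.mulVec v ∈ Submodule.span ℂ {w : Fin d1 × (Fin d2 × h) → ℂ |
        ∃ s ∈ S, ∃ u : h → ℂ, w = fun p => s (p.1, p.2.1) * u p.2.2}) →
      ∃ Γ : Fin d1 × (Fin d2 × h) → ℂ,
        (dotProduct (star Γ) ((pt1 ρ).mulVec Γ)).re < 0 := by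
  classical
  intro ρ hPSD htr hsupp
  -- the partial trace over h
  set σ : Matrix (Fin d1 × Fin d2) (Fin d1 × Fin d2) ℂ :=
    Matrix.of fun x y => ∑ k : h, ρ (x.1, (x.2, k)) (y.1, (y.2, k)) with hσ
  have hAB : ∀ x y : Fin d1 × Fin d2, σ x y = ∑ k : h, ρ (x.1, (x.2, k)) (y.1, (y.2, k)) :=
    fun _ _ => rfl
  -- σ is PSD
  have hσPSD : σ.PosSemidef := by
    rw [Matrix.posSemidef_iff_dotProduct_mulVec]
    constructor
    · ext x y
      simp only [Matrix.conjTranspose_apply, hAB, star_sum]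
      exact Finset.sum_congr rfl fun k _ => hPSD.1.apply _ _
    · intro w
      rw [quad_sum σ ρ hAB w]
      exact Finset.sum_nonneg fun k _ => hPSD.dotProduct_mulVec_nonneg _
  -- trace
  have hσtr : σ.trace = 1 := by
    rw [← htr]
    simp only [Matrix.trace, Matrix.diag, hAB]
    rw [Fintype.sum_prod_type (f := fun p : Fin d1 × (Fin d2 × h) => ρ p p)]
    rw [Fintype.sum_prod_type]
    refine Finset.sum_congr rfl fun x1 _ => ?_
    rw [Fintype.sum_prod_type (f := fun p : Fin d2 × h => ρ (x1, p) (x1, p))]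
  -- support
  have hσsupp : ∀ v, σ.mulVec v ∈ S := by
    intro v
    have key : σ.mulVec v = ∑ k : h, (fun x : Fin d1 × Fin d2 =>
        (ρ.mulVec (embed k v)) (x.1, (x.2, k))) := by
      funext x
      simp only [Matrix.mulVec, dotProduct, hAB, Finset.sum_apply]
      rw [show (∑ y : Fin d1 × Fin d2, (∑ k : h, ρ (x.1, (x.2, k)) (y.1, (y.2, k))) * v y)
          = ∑ y : Fin d1 × Fin d2, ∑ k : h, ρ (x.1, (x.2, k)) (y.1, (y.2, k)) * v y from
        Finset.sum_congr rfl fun y _ => Finset.sum_mul _ _ _]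
      rw [Finset.sum_comm]
      exact Finset.sum_congr rfl fun k _ => (sum_embed k _ v).symm
    rw [key]
    refine Submodule.sum_mem S fun k _ => ?_
    -- linear map extracting the k-slice
    let Φ : (Fin d1 × (Fin d2 × h) → ℂ) →ₗ[ℂ] (Fin d1 × Fin d2 → ℂ) :=
      { toFun := fun w => fun x => w (x.1, (x.2, k)),
        map_add' := fun _ _ => rfl,
        map_smul' := fun _ _ => rfl }
    have hmem := hsupp (embed k v)
    refine Submodule.span_induction (p := fun w _ => Φ w ∈ S) ?_ ?_ ?_ ?_ hmem
    · rintro w ⟨s, hs, u, rfl⟩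
      have : Φ (fun p => s (p.1, p.2.1) * u p.2.2) = u k • s := by
        funext x; simp [Φ, mul_comm]
      rw [this]
      exact S.smul_mem _ hs
    · simp only [map_zero]; exact S.zero_mem
    · intro x y _ _ hx hy; rw [map_add]; exact S.add_mem hx hy
    · intro c x _ hx; rw [map_smul]; exact S.smul_mem c hx
  obtain ⟨Γ, hΓ⟩ := hS σ hσPSD hσtr hσsupp
  have hpt : ∀ x y : Fin d1 × Fin d2,
      (pt1 σ) x y = ∑ k : h, (pt1 ρ) (x.1, (x.2, k)) (y.1, (y.2, k)) := by
    intro x y; rfl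
  have hsum := quad_sum (pt1 σ) (pt1 ρ) hpt Γ
  by_contra hcon
  push_neg at hcon
  have : 0 ≤ (dotProduct (star Γ) ((pt1 σ).mulVec Γ)).re := by
    rw [hsum, Complex.re_sum]
    exact Finset.sum_nonneg fun k _ => hcon (embed k Γ)
  linarith
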